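/- Let Φ : U → V be a bi-Lipschitz bijection between open sets U, V ⊆ ℝⁿ, let k ∈ ℕ, and let p ∈ [1,∞] (with the convention n/∞ = 0). Then for every ω ∈ LᵖΛᵏ(V) the pullback Φ*ω belongs to LᵖΛᵏ(U), and ‖Φ*ω‖_{LᵖΛᵏ(U)} ≤ ‖DΦ‖_{L∞(U)}ᵏ · ‖det D(Φ⁻¹)‖_{L∞(V)}^{1/p} · ‖ω‖_{LᵖΛᵏ(V)} ≤ ‖DΦ‖_{L∞(U)}ᵏ · ‖D(Φ⁻¹)‖_{L∞(V)}^{n/p} · ‖ω‖_{LᵖΛᵏ(V)}, where DΦ and D(Φ⁻¹) denote the almost-everywhere Fréchet derivatives and ‖DΦ‖_{L∞(U)} the essential supremum of the operator norm ‖DΦ_x‖. -/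

import Mathlib

open Set MeasureTheory Metric
open scoped ENNReal NNReal

noncomputable section

/-- Euclidean `n`-space. -/
abbrev Euc (n : ℕ) : Type := EuclideanSpace ℝ (Fin n)

/-- `f` is bi-Lipschitz on `s` (i.e. Lipschitz with a Lipschitz inverse on the image). -/
def BiLipschitzOn {α β : Type*} [PseudoMetricSpace α] [PseudoMetricSpace β]
    (f : α → β) (s : Set α) : Prop :=
  ∃ C c : ℝ, 0 < c ∧ ∀ x ∈ s, ∀ y ∈ s,
    c * dist x y ≤ dist (f x) (f y) ∧ dist (f x) (f y) ≤ C * dist x y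

/-- `f` is locally Lipschitz (LIP) on `s`: every point of `s` has a relative
neighborhood on which `f` is Lipschitz. -/
def LocLipschitzOn {α β : Type*} [PseudoMetricSpace α] [PseudoMetricSpace β]
    (f : α → β) (s : Set α) : Prop :=
  ∀ x ∈ s, ∃ t ∈ nhdsWithin x s, ∃ K : ℝ,
    ∀ a ∈ t ∩ s, ∀ b ∈ t ∩ s, dist (f a) (f b) ≤ K * dist a b

/-- `f` is a LIP embedding of `s`: injective, locally Lipschitz, with locally
Lipschitz inverse on the image. -/
def IsLIPEmbeddingOn {α β : Type*} [PseudoMetricSpace α] [PseudoMetricSpace β]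
    (f : α → β) (s : Set α) : Prop :=
  Set.InjOn f s ∧ LocLipschitzOn f s ∧
    ∃ g : β → α, (∀ x ∈ s, g (f x) = x) ∧ LocLipschitzOn g (f '' s)

/- The pointwise norm of a `k`-form value: the ℓ² norm of its coefficients
on the increasing basis `k`-tuples. -/
open Classical in
def formNormF {n k : ℕ} (g : (Fin k → Euc n) → ℝ) : ℝ :=
  Real.sqrt (∑ σ ∈ Finset.univ.filter (fun σ : Fin k → Fin n => StrictMono σ),
    (g (fun i => EuclideanSpace.single (σ i) 1)) ^ 2)

/-- The `Lᵖ` norm of a `k`-form over a set `U` (`p = ∞` giving the essential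
supremum). -/
def formLpNorm {n k : ℕ} (p : ℝ≥0∞)
    (ω : Euc n → (Euc n [⋀^Fin k]→ₗ[ℝ] ℝ)) (U : Set (Euc n)) : ℝ≥0∞ :=
  eLpNorm (fun x => formNormF (⇑(ω x))) p (volume.restrict U)

/-- The pullback of a `k`-form along a map `Φ`, via the (a.e. defined) Fréchet
derivative of `Φ`. -/
def pullbackForm {n k : ℕ} (Φ : Euc n → Euc n)
    (ω : Euc n → (Euc n [⋀^Fin k]→ₗ[ℝ] ℝ)) : Euc n → (Euc n [⋀^Fin k]→ₗ[ℝ] ℝ) :=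
  fun x => (ω (Φ x)).compLinearMap ((fderiv ℝ Φ x : Euc n →ₗ[ℝ] Euc n))

/-- The essential supremum over `U` of the operator norm of the derivative of `Φ`. -/
def derivLinfNorm {n : ℕ} (Φ : Euc n → Euc n) (U : Set (Euc n)) : ℝ≥0∞ :=
  essSup (fun x => (‖fderiv ℝ Φ x‖₊ : ℝ≥0∞)) (volume.restrict U)

/-- The essential supremum over `U` of `|det DΦ|`. -/
def detLinfNorm {n : ℕ} (Φ : Euc n → Euc n) (U : Set (Euc n)) : ℝ≥0∞ :=
  essSup (fun x => (‖LinearMap.det ((fderiv ℝ Φ x : Euc n →ₗ[ℝ] Euc n))‖₊ : ℝ≥0∞))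
    (volume.restrict U)

section PullbackAux
open scoped RealInnerProductSpace

lemma euc_norm_sq {n : ℕ} (w : Euc n) : ‖w‖^2 = ∑ m : Fin n, (w m)^2 := by
  rw [EuclideanSpace.norm_eq, Real.sq_sqrt (by positivity)]
  simp [sq_abs]

lemma sum_sq_comp_le {n : ℕ} (L : Euc n →ₗ[ℝ] ℝ) (A : Euc n →L[ℝ] Euc n) :
    ∑ m : Fin n, (L (A (EuclideanSpace.single m 1)))^2
      ≤ ‖A‖^2 * ∑ m : Fin n, (L (EuclideanSpace.single m 1))^2 := by
  set u : Euc n := (WithLp.equiv 2 (Fin n → ℝ)).symm (fun m => L (EuclideanSpace.single m 1)) with hu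
  have hum : ∀ m, u m = L (EuclideanSpace.single m 1) := fun m => rfl
  have hL : ∀ v : Euc n, L v = ⟪u, v⟫ := by
    have : L = ((innerSL ℝ u : Euc n →L[ℝ] ℝ) : Euc n →ₗ[ℝ] ℝ) := by
      apply (EuclideanSpace.basisFun (Fin n) ℝ).toBasis.ext
      intro i
      simp only [OrthonormalBasis.coe_toBasis, EuclideanSpace.basisFun_apply,
        ContinuousLinearMap.coe_coe, innerSL_apply_apply]
      rw [EuclideanSpace.inner_single_right]
      simp [hum]
    intro v; rw [this]; rfl
  have key : ∀ m, L (A (EuclideanSpace.single m 1)) = ((ContinuousLinearMap.adjoint A) u) m := by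
    intro m
    rw [hL, ← ContinuousLinearMap.adjoint_inner_left, EuclideanSpace.inner_single_right]
    simp
  calc ∑ m : Fin n, (L (A (EuclideanSpace.single m 1)))^2
      = ∑ m : Fin n, (((ContinuousLinearMap.adjoint A) u) m)^2 := by
        exact Finset.sum_congr rfl fun m _ => by rw [key]
    _ = ‖(ContinuousLinearMap.adjoint A) u‖^2 := (euc_norm_sq _).symm
    _ ≤ (‖A‖ * ‖u‖)^2 := by
        have h1 : ‖(ContinuousLinearMap.adjoint A) u‖ ≤ ‖ContinuousLinearMap.adjoint A‖ * ‖u‖ :=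
          (ContinuousLinearMap.adjoint A).le_opNorm u
        have h2 : ‖ContinuousLinearMap.adjoint A‖ = ‖A‖ :=
          LinearIsometryEquiv.norm_map ContinuousLinearMap.adjoint A
        rw [h2] at h1
        exact pow_le_pow_left₀ (norm_nonneg _) h1 2
    _ = ‖A‖^2 * ‖u‖^2 := mul_pow _ _ _
    _ = ‖A‖^2 * ∑ m : Fin n, (L (EuclideanSpace.single m 1))^2 := by
        rw [euc_norm_sq]; simp_rw [hum]

lemma slot_le {n k : ℕ} (g : MultilinearMap ℝ (fun _ : Fin k => Euc n) ℝ)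
    (A : Euc n →L[ℝ] Euc n) (j : Fin k) :
    ∑ σ : Fin k → Fin n,
      (g.compLinearMap (fun i => if i = j then (A : Euc n →ₗ[ℝ] Euc n) else LinearMap.id)
        (fun i => EuclideanSpace.single (σ i) 1))^2
      ≤ ‖A‖^2 * ∑ σ : Fin k → Fin n, (g (fun i => EuclideanSpace.single (σ i) 1))^2 := by
  classical
  set e : Fin n → Euc n := fun m => EuclideanSpace.single m 1 with he
  set E := Equiv.funSplitAt j (Fin n)
  -- base tuple for fixed ρ
  set base : ({ i : Fin k // i ≠ j } → Fin n) → (Fin k → Euc n) :=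
    fun ρ i => if h : i = j then 0 else e (ρ ⟨i, h⟩) with hbase
  have hsymm : ∀ (m : Fin n) (ρ : { i : Fin k // i ≠ j } → Fin n),
      (fun i => e (E.symm (m, ρ) i)) = Function.update (base ρ) j (e m) := by
    intro m ρ
    funext i
    by_cases h : i = j
    · subst h
      simp [E, Equiv.funSplitAt, Equiv.piSplitAt, Function.update_self]
    · simp [E, Equiv.funSplitAt, Equiv.piSplitAt, Function.update_of_ne h, h, hbase]
  have hLHS : ∀ (m : Fin n) (ρ : { i : Fin k // i ≠ j } → Fin n),
      (g.compLinearMap (fun i => if i = j then (A : Euc n →ₗ[ℝ] Euc n) else LinearMap.id))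
        (fun i => e (E.symm (m, ρ) i))
      = (g.toLinearMap (base ρ) j) (A (e m)) := by
    intro m ρ
    rw [MultilinearMap.compLinearMap_apply]
    have : (fun i => (if i = j then (A : Euc n →ₗ[ℝ] Euc n) else LinearMap.id) (e (E.symm (m, ρ) i)))
        = Function.update (base ρ) j (A (e m)) := by
      funext i
      by_cases h : i = j
      · subst h
        simp [E, Equiv.funSplitAt, Equiv.piSplitAt, Function.update_self]
      · simp [E, Equiv.funSplitAt, Equiv.piSplitAt, Function.update_of_ne h, h, hbase]
    rw [this]
    rfl
  have hRHS : ∀ (m : Fin n) (ρ : { i : Fin k // i ≠ j } → Fin n),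
      g (fun i => e (E.symm (m, ρ) i)) = (g.toLinearMap (base ρ) j) (e m) := by
    intro m ρ
    rw [hsymm m ρ]
    rfl
  calc ∑ σ : Fin k → Fin n,
      (g.compLinearMap (fun i => if i = j then (A : Euc n →ₗ[ℝ] Euc n) else LinearMap.id)
        (fun i => e (σ i)))^2
      = ∑ pr : Fin n × ({ i : Fin k // i ≠ j } → Fin n),
          (g.compLinearMap (fun i => if i = j then (A : Euc n →ₗ[ℝ] Euc n) else LinearMap.id)
            (fun i => e (E.symm pr i)))^2 := by
        rw [← Equiv.sum_comp E.symm]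
    _ = ∑ ρ : { i : Fin k // i ≠ j } → Fin n, ∑ m : Fin n,
          ((g.toLinearMap (base ρ) j) (A (e m)))^2 := by
        rw [Fintype.sum_prod_type]
        rw [Finset.sum_comm]
        exact Finset.sum_congr rfl fun ρ _ => Finset.sum_congr rfl fun m _ => by rw [hLHS]
    _ ≤ ∑ ρ : { i : Fin k // i ≠ j } → Fin n, ‖A‖^2 * ∑ m : Fin n,
          ((g.toLinearMap (base ρ) j) (e m))^2 :=
        Finset.sum_le_sum fun ρ _ => sum_sq_comp_le _ A
    _ = ‖A‖^2 * ∑ σ : Fin k → Fin n, (g (fun i => e (σ i)))^2 := by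
        rw [← Finset.mul_sum]
        congr 1
        rw [← Equiv.sum_comp E.symm (fun σ => (g (fun i => e (σ i)))^2), Fintype.sum_prod_type,
          Finset.sum_comm]
        exact Finset.sum_congr rfl fun ρ _ => Finset.sum_congr rfl fun m _ => by rw [hRHS]

lemma comp_finset_le {n k : ℕ} (A : Euc n →L[ℝ] Euc n)
    (s : Finset (Fin k)) :
    ∀ (g : MultilinearMap ℝ (fun _ : Fin k => Euc n) ℝ),
    ∑ σ : Fin k → Fin n,
      (g.compLinearMap (fun i => if i ∈ s then (A : Euc n →ₗ[ℝ] Euc n) else LinearMap.id)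
        (fun i => EuclideanSpace.single (σ i) 1))^2
      ≤ ‖A‖^(2 * s.card) * ∑ σ : Fin k → Fin n, (g (fun i => EuclideanSpace.single (σ i) 1))^2 := by
  classical
  induction s using Finset.induction_on with
  | empty =>
      intro g
      simp only [Finset.notMem_empty, if_false, Finset.card_empty, mul_zero, pow_zero, one_mul]
      apply le_of_eq
      refine Finset.sum_congr rfl fun σ _ => ?_
      rw [MultilinearMap.compLinearMap_apply]
      simp
  | @insert j s hj ih =>
      intro g
      have hsplit : ∀ σ : Fin k → Fin n,
          (g.compLinearMap (fun i => if i ∈ insert j s then (A : Euc n →ₗ[ℝ] Euc n) else LinearMap.id))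
            (fun i => EuclideanSpace.single (σ i) 1)
          = ((g.compLinearMap (fun i => if i ∈ s then (A : Euc n →ₗ[ℝ] Euc n) else LinearMap.id)).compLinearMap
              (fun i => if i = j then (A : Euc n →ₗ[ℝ] Euc n) else LinearMap.id))
            (fun i => EuclideanSpace.single (σ i) 1) := by
        intro σ
        rw [MultilinearMap.compLinearMap_apply, MultilinearMap.compLinearMap_apply,
          MultilinearMap.compLinearMap_apply]
        congr 1
        funext i
        by_cases hij : i = j
        · subst hij
          simp [hj]
        · by_cases his : i ∈ s <;> simp [hij, his]
      calc ∑ σ : Fin k → Fin n,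
          ((g.compLinearMap (fun i => if i ∈ insert j s then (A : Euc n →ₗ[ℝ] Euc n) else LinearMap.id))
            (fun i => EuclideanSpace.single (σ i) 1))^2
          = ∑ σ : Fin k → Fin n,
            (((g.compLinearMap (fun i => if i ∈ s then (A : Euc n →ₗ[ℝ] Euc n) else LinearMap.id)).compLinearMap
              (fun i => if i = j then (A : Euc n →ₗ[ℝ] Euc n) else LinearMap.id))
              (fun i => EuclideanSpace.single (σ i) 1))^2 := by
            exact Finset.sum_congr rfl fun σ _ => by rw [hsplit]
        _ ≤ ‖A‖^2 * ∑ σ : Fin k → Fin n,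
              ((g.compLinearMap (fun i => if i ∈ s then (A : Euc n →ₗ[ℝ] Euc n) else LinearMap.id))
                (fun i => EuclideanSpace.single (σ i) 1))^2 := slot_le _ A j
        _ ≤ ‖A‖^2 * (‖A‖^(2 * s.card) * ∑ σ : Fin k → Fin n, (g (fun i => EuclideanSpace.single (σ i) 1))^2) :=
            mul_le_mul_of_nonneg_left (ih g) (by positivity)
        _ = ‖A‖^(2 * (insert j s).card) * ∑ σ : Fin k → Fin n, (g (fun i => EuclideanSpace.single (σ i) 1))^2 := by
            rw [Finset.card_insert_of_notMem hj, ← mul_assoc, ← pow_add]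
            ring_nf

lemma sum_all_eq {n k : ℕ} (f : Euc n [⋀^Fin k]→ₗ[ℝ] ℝ) :
    ∑ σ : Fin k → Fin n, (f (fun i => EuclideanSpace.single (σ i) 1))^2
      = (Nat.factorial k : ℝ) *
        ∑ τ ∈ Finset.univ.filter (fun τ : Fin k → Fin n => StrictMono τ),
          (f (fun i => EuclideanSpace.single (τ i) 1))^2 := by
  classical
  -- restrict to injective σ
  have h1 : ∑ σ ∈ Finset.univ.filter (fun σ : Fin k → Fin n => Function.Injective σ),
      (f (fun i => EuclideanSpace.single (σ i) 1))^2
      = ∑ σ : Fin k → Fin n, (f (fun i => EuclideanSpace.single (σ i) 1))^2 := by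
    apply Finset.sum_filter_of_ne
    intro σ _ hne
    by_contra hinj
    rw [Function.not_injective_iff] at hinj
    obtain ⟨a, b, hab, hne'⟩ := hinj
    exact hne (by rw [f.map_eq_zero_of_eq _ (by rw [hab]) hne', zero_pow two_ne_zero])
  rw [← h1]
  -- bijection with (strictMono) × Perm
  rw [show ((Finset.univ.filter (fun σ : Fin k → Fin n => Function.Injective σ)).sum
      (fun σ => (f (fun i => EuclideanSpace.single (σ i) 1))^2))
    = ∑ q ∈ (Finset.univ.filter (fun τ : Fin k → Fin n => StrictMono τ)) ×ˢ
        (Finset.univ : Finset (Equiv.Perm (Fin k))),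
        (f (fun i => EuclideanSpace.single (q.1 i) 1))^2 from ?_]
  · rw [Finset.sum_product]
    rw [Finset.mul_sum]
    refine Finset.sum_congr rfl fun τ _ => ?_
    have : ∀ y : Equiv.Perm (Fin k),
        (f fun i => EuclideanSpace.single ((τ, y).1 i) (1:ℝ))^2
        = (f fun i => EuclideanSpace.single (τ i) (1:ℝ))^2 := fun y => rfl
    rw [Finset.sum_congr rfl fun y _ => this y, Finset.sum_const, Finset.card_univ,
      Fintype.card_perm, Fintype.card_fin, nsmul_eq_mul]
  · refine Finset.sum_nbij' (i := fun σ => (σ ∘ Tuple.sort σ, (Tuple.sort σ)⁻¹))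
      (j := fun q => q.1 ∘ q.2) ?_ ?_ ?_ ?_ ?_
    · intro σ hσ
      rw [Finset.mem_filter] at hσ
      have hinj : Function.Injective σ := hσ.2
      refine Finset.mem_product.2 ⟨Finset.mem_filter.2 ⟨Finset.mem_univ _, ?_⟩, Finset.mem_univ _⟩
      exact (Tuple.monotone_sort σ).strictMono_of_injective (hinj.comp (Equiv.injective _))
    · intro q hq
      rw [Finset.mem_product, Finset.mem_filter] at hq
      refine Finset.mem_filter.2 ⟨Finset.mem_univ _, ?_⟩
      exact hq.1.2.injective.comp (Equiv.injective _)
    · intro σ hσ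
      funext x
      simp [Function.comp]
    · intro q hq
      rw [Finset.mem_product, Finset.mem_filter] at hq
      obtain ⟨⟨-, hSM⟩, -⟩ := hq
      obtain ⟨τ, π⟩ := q
      have hinj : Function.Injective (τ ∘ π) := hSM.injective.comp (Equiv.injective _)
      have hmono : Monotone ((τ ∘ π) ∘ ⇑π⁻¹) := by
        have : (τ ∘ π) ∘ ⇑π⁻¹ = τ := by funext x; simp
        rw [this]; exact hSM.monotone
      have hsort : ⇑π⁻¹ = ⇑(Tuple.sort (τ ∘ π)) := by
        have h := Tuple.comp_sort_eq_comp_iff_monotone.2 hmono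
        funext x
        exact hinj (congrFun h x)
      have hsort' : π⁻¹ = Tuple.sort (τ ∘ π) := Equiv.coe_fn_injective hsort
      simp only [Prod.mk.injEq]
      constructor
      · funext x
        rw [← hsort']
        simp
      · rw [← hsort', inv_inv]
    · intro σ hσ
      -- value equality via map_perm
      have hcomp : (fun i => EuclideanSpace.single (σ i) (1:ℝ))
          = (fun i => EuclideanSpace.single ((σ ∘ Tuple.sort σ) i) (1:ℝ)) ∘ ⇑(Tuple.sort σ)⁻¹ := by
        funext i; simp [Function.comp]
      rw [hcomp, AlternatingMap.map_perm]
      rcases Int.units_eq_one_or (Equiv.Perm.sign (Tuple.sort σ)⁻¹) with h | h <;>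
        simp [h, Units.smul_def]

lemma formNormF_nonneg {n k : ℕ} (g : (Fin k → Euc n) → ℝ) : 0 ≤ formNormF g :=
  Real.sqrt_nonneg _

lemma formNormF_comp_le {n k : ℕ} (f : Euc n [⋀^Fin k]→ₗ[ℝ] ℝ) (A : Euc n →L[ℝ] Euc n) :
    formNormF ⇑(f.compLinearMap (A : Euc n →ₗ[ℝ] Euc n)) ≤ ‖A‖^k * formNormF ⇑f := by
  classical
  set T : (Euc n [⋀^Fin k]→ₗ[ℝ] ℝ) → ℝ := fun g =>
    ∑ τ ∈ Finset.univ.filter (fun τ : Fin k → Fin n => StrictMono τ),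
      (g (fun i => EuclideanSpace.single (τ i) 1))^2 with hT
  have hTnn : ∀ g, 0 ≤ T g := fun g => Finset.sum_nonneg fun τ _ => sq_nonneg _
  -- key: T (f ∘ A) ≤ ‖A‖^(2k) * T f
  have hkey : T (f.compLinearMap (A : Euc n →ₗ[ℝ] Euc n)) ≤ ‖A‖^(2*k) * T f := by
    have hfac : (0:ℝ) < (Nat.factorial k : ℝ) := by exact_mod_cast Nat.factorial_pos k
    rw [← mul_le_mul_iff_right₀ hfac]
    calc (Nat.factorial k : ℝ) * T (f.compLinearMap (A : Euc n →ₗ[ℝ] Euc n))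
        = ∑ σ : Fin k → Fin n,
            ((f.compLinearMap (A : Euc n →ₗ[ℝ] Euc n)) (fun i => EuclideanSpace.single (σ i) 1))^2 :=
          (sum_all_eq _).symm
      _ = ∑ σ : Fin k → Fin n,
            ((f.toMultilinearMap.compLinearMap
              (fun i => if i ∈ (Finset.univ : Finset (Fin k)) then (A : Euc n →ₗ[ℝ] Euc n) else LinearMap.id))
              (fun i => EuclideanSpace.single (σ i) 1))^2 := by
          refine Finset.sum_congr rfl fun σ _ => ?_
          congr 1
          rw [AlternatingMap.compLinearMap_apply, MultilinearMap.compLinearMap_apply]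
          simp
      _ ≤ ‖A‖^(2 * (Finset.univ : Finset (Fin k)).card) *
            ∑ σ : Fin k → Fin n, (f (fun i => EuclideanSpace.single (σ i) 1))^2 :=
          comp_finset_le A _ _
      _ = ‖A‖^(2*k) * ((Nat.factorial k : ℝ) * T f) := by
          rw [Finset.card_univ, Fintype.card_fin, sum_all_eq]
      _ = (Nat.factorial k : ℝ) * (‖A‖^(2*k) * T f) := by ring
  have h1 : formNormF ⇑(f.compLinearMap (A : Euc n →ₗ[ℝ] Euc n))
      = Real.sqrt (T (f.compLinearMap (A : Euc n →ₗ[ℝ] Euc n))) := by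
    rw [formNormF]
  have h2 : formNormF ⇑f = Real.sqrt (T f) := by rw [formNormF]
  rw [h1, h2]
  calc Real.sqrt (T (f.compLinearMap (A : Euc n →ₗ[ℝ] Euc n)))
      ≤ Real.sqrt (‖A‖^(2*k) * T f) := Real.sqrt_le_sqrt hkey
    _ = ‖A‖^k * Real.sqrt (T f) := by
        rw [Real.sqrt_mul (by positivity), show 2*k = k*2 from mul_comm 2 k, pow_mul,
          Real.sqrt_sq (by positivity)]

lemma abs_det_le_norm_pow {n : ℕ} (A : Euc n →L[ℝ] Euc n) :
    |LinearMap.det (A : Euc n →ₗ[ℝ] Euc n)| ≤ ‖A‖^n := by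
  have himg : (A : Euc n →ₗ[ℝ] Euc n) '' closedBall 0 1 ⊆ closedBall 0 ‖A‖ := by
    rintro - ⟨x, hx, rfl⟩
    rw [mem_closedBall_zero_iff] at hx ⊢
    calc ‖A x‖ ≤ ‖A‖ * ‖x‖ := A.le_opNorm x
      _ ≤ ‖A‖ * 1 := by nlinarith [norm_nonneg A, A.le_opNorm x]
      _ = ‖A‖ := mul_one _
  have h1 : volume ((A : Euc n →ₗ[ℝ] Euc n) '' closedBall 0 1)
      = ENNReal.ofReal |LinearMap.det (A : Euc n →ₗ[ℝ] Euc n)| * volume (closedBall (0:Euc n) 1) :=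
    MeasureTheory.Measure.addHaar_image_linearMap _ _ _
  have h2 : volume (closedBall (0:Euc n) ‖A‖)
      = ENNReal.ofReal (‖A‖ ^ Module.finrank ℝ (Euc n)) * volume (closedBall (0:Euc n) 1) :=
    MeasureTheory.Measure.addHaar_closedBall' _ _ (norm_nonneg A)
  have hle : ENNReal.ofReal |LinearMap.det (A : Euc n →ₗ[ℝ] Euc n)| * volume (closedBall (0:Euc n) 1)
      ≤ ENNReal.ofReal (‖A‖ ^ Module.finrank ℝ (Euc n)) * volume (closedBall (0:Euc n) 1) := by
    rw [← h1, ← h2]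
    exact le_trans (measure_mono himg) (le_of_eq rfl)
  have hpos : volume (closedBall (0:Euc n) 1) ≠ 0 :=
    (measure_closedBall_pos volume (0:Euc n) one_pos).ne'
  have hfin : volume (closedBall (0:Euc n) 1) ≠ ⊤ := measure_closedBall_lt_top.ne
  have h3 : ENNReal.ofReal |LinearMap.det (A : Euc n →ₗ[ℝ] Euc n)|
      ≤ ENNReal.ofReal (‖A‖ ^ Module.finrank ℝ (Euc n)) :=
    (ENNReal.mul_le_mul_iff_left hpos hfin).1 hle
  have h4 := (ENNReal.ofReal_le_ofReal_iff (by positivity)).1 h3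
  rwa [finrank_euclideanSpace_fin] at h4

lemma lipschitzOnWith_image_null {n : ℕ} {f : Euc n → Euc n} {K : ℝ≥0} {s : Set (Euc n)}
    (hf : LipschitzOnWith K f s) (hs : volume s = 0) : volume (f '' s) = 0 := by
  have h1 : μH[(Module.finrank ℝ (Euc n) : ℝ)] s = 0 :=
    Measure.absolutelyContinuous_isAddHaarMeasure (μH[(Module.finrank ℝ (Euc n) : ℝ)]) volume hs
  have h2 : μH[(Module.finrank ℝ (Euc n) : ℝ)] (f '' s) = 0 := by
    have := hf.hausdorffMeasure_image_le (d := (Module.finrank ℝ (Euc n) : ℝ))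
      (Nat.cast_nonneg _)
    rw [h1, mul_zero] at this
    exact le_antisymm this bot_le
  exact Measure.absolutelyContinuous_isAddHaarMeasure volume
    (μH[(Module.finrank ℝ (Euc n) : ℝ)]) h2

end PullbackAux

/-- Pullback estimate: for a bi-Lipschitz bijection `Φ : U → V`
between open subsets of `ℝⁿ` and `p ∈ [1,∞]` (with `n/∞ = 0`), the pullback maps
`LᵖΛᵏ(V)` to `LᵖΛᵏ(U)` with
`‖Φ*ω‖_{Lᵖ(U)} ≤ ‖DΦ‖_∞ᵏ ‖det DΦ⁻¹‖_∞^{1/p} ‖ω‖_{Lᵖ(V)}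
  ≤ ‖DΦ‖_∞ᵏ ‖DΦ⁻¹‖_∞^{n/p} ‖ω‖_{Lᵖ(V)}`. -/
theorem pullback_Lp_estimate {n k : ℕ} (U V : Set (Euc n))
    (hU : IsOpen U) (hV : IsOpen V) (Φ Φinv : Euc n → Euc n)
    (hbij : Set.BijOn Φ U V) (hlip : BiLipschitzOn Φ U)
    (hinv : ∀ x ∈ U, Φinv (Φ x) = x) (hinv' : ∀ y ∈ V, Φ (Φinv y) = y)
    (p : ℝ≥0∞) (hp : 1 ≤ p)
    (ω : Euc n → (Euc n [⋀^Fin k]→ₗ[ℝ] ℝ)) (hω : formLpNorm p ω V < ⊤) :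
    formLpNorm p (pullbackForm Φ ω) U < ⊤ ∧
    formLpNorm p (pullbackForm Φ ω) U
      ≤ derivLinfNorm Φ U ^ k * detLinfNorm Φinv V ^ (((1 : ℝ≥0∞) / p).toReal) *
        formLpNorm p ω V ∧
    derivLinfNorm Φ U ^ k * detLinfNorm Φinv V ^ (((1 : ℝ≥0∞) / p).toReal) *
        formLpNorm p ω V
      ≤ derivLinfNorm Φ U ^ k * derivLinfNorm Φinv V ^ (((n : ℝ≥0∞) / p).toReal) *
        formLpNorm p ω V := by
  classical
  obtain ⟨C, c, hc, hCc⟩ := hlip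
  have hUm : MeasurableSet U := hU.measurableSet
  have hVm : MeasurableSet V := hV.measurableSet
  have hΦV : Set.MapsTo Φ U V := hbij.mapsTo
  have hΦinvU : ∀ y ∈ V, Φinv y ∈ U := by
    intro y hy
    obtain ⟨x, hx, rfl⟩ := hbij.surjOn hy
    rw [hinv x hx]; exact hx
  set CC : ℝ≥0 := C.toNNReal with hCC
  have hΦlip : LipschitzOnWith CC Φ U := by
    rw [lipschitzOnWith_iff_dist_le_mul]
    intro x hx y hy
    exact le_trans (hCc x hx y hy).2
      (mul_le_mul_of_nonneg_right (Real.le_coe_toNNReal C) dist_nonneg)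
  set cc : ℝ≥0 := (c⁻¹).toNNReal with hcc
  have hΦinvlip : LipschitzOnWith cc Φinv V := by
    rw [lipschitzOnWith_iff_dist_le_mul]
    intro a ha b hb
    have h1 := (hCc _ (hΦinvU a ha) _ (hΦinvU b hb)).1
    rw [hinv' a ha, hinv' b hb] at h1
    have h2 : dist (Φinv a) (Φinv b) ≤ c⁻¹ * dist a b := by
      rw [inv_mul_eq_div, le_div_iff₀ hc, mul_comm]
      exact h1
    exact le_trans h2 (mul_le_mul_of_nonneg_right (Real.le_coe_toNNReal _) dist_nonneg)
  -- essSup bounds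
  set M := derivLinfNorm Φ U with hM
  set D := detLinfNorm Φinv V with hD
  set E := derivLinfNorm Φinv V with hE
  have hMle : M ≤ (CC : ℝ≥0∞) := by
    refine essSup_le_of_ae_le _ ?_
    filter_upwards [ae_restrict_mem hUm] with x hx
    have h := norm_fderiv_le_of_lipschitzOn ℝ (hU.mem_nhds hx) hΦlip
    exact_mod_cast ENNReal.coe_le_coe.2 (by exact_mod_cast h)
  have hMfin : M ≠ ⊤ := (lt_of_le_of_lt hMle ENNReal.coe_lt_top).ne
  have hEle : E ≤ (cc : ℝ≥0∞) := by
    refine essSup_le_of_ae_le _ ?_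
    filter_upwards [ae_restrict_mem hVm] with y hy
    have h := norm_fderiv_le_of_lipschitzOn ℝ (hV.mem_nhds hy) hΦinvlip
    exact_mod_cast ENNReal.coe_le_coe.2 (by exact_mod_cast h)
  have hEfin : E ≠ ⊤ := (lt_of_le_of_lt hEle ENNReal.coe_lt_top).ne
  have hdet_pt : ∀ y : Euc n,
      (‖LinearMap.det ((fderiv ℝ Φinv y : Euc n →ₗ[ℝ] Euc n))‖₊ : ℝ≥0∞)
        ≤ (‖fderiv ℝ Φinv y‖₊ : ℝ≥0∞)^n := by
    intro y
    have h2 : ‖LinearMap.det ((fderiv ℝ Φinv y : Euc n →ₗ[ℝ] Euc n))‖ ≤ ‖fderiv ℝ Φinv y‖^n := by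
      rw [Real.norm_eq_abs]; exact abs_det_le_norm_pow _
    rw [← ENNReal.coe_pow, ENNReal.coe_le_coe]
    exact_mod_cast h2
  have hDle : D ≤ E^n := by
    refine essSup_le_of_ae_le _ ?_
    filter_upwards [ENNReal.ae_le_essSup (fun y => (‖fderiv ℝ Φinv y‖₊ : ℝ≥0∞))] with y hy
    exact le_trans (hdet_pt y) (pow_le_pow_left' hy n)
  have hDfin : D ≠ ⊤ := by
    refine (lt_of_le_of_lt (hDle.trans (pow_le_pow_left' hEle n)) ?_).ne
    exact ENNReal.pow_lt_top ENNReal.coe_lt_top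
  -- Rademacher for Φinv and the differentiability set
  have hdiffae : ∀ᵐ y ∂(volume.restrict V), DifferentiableWithinAt ℝ Φinv V y :=
    hΦinvlip.ae_differentiableWithinAt hVm
  set V' : Set (Euc n) := V ∩ {y | DifferentiableAt ℝ Φinv y} with hV'
  have hV'm : MeasurableSet V' := hVm.inter (measurableSet_of_differentiableAt ℝ Φinv)
  have hV'sub : V' ⊆ V := inter_subset_left
  have hVV'null : volume ({y | ¬ y ∈ V'} ∩ V) = 0 := by
    have h : ∀ᵐ y ∂(volume.restrict V), y ∈ V' := by
      filter_upwards [hdiffae, ae_restrict_mem hVm] with y h1 h2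
      exact ⟨h2, h1.differentiableAt (hV.mem_nhds h2)⟩
    have h2 := ae_iff.1 h
    rwa [Measure.restrict_apply' hVm] at h2
  have himgsub : Φinv '' V' ⊆ U := by
    rintro - ⟨y, hy, rfl⟩
    exact hΦinvU y (hV'sub hy)
  have hUdiff : volume (U \ Φinv '' V') = 0 := by
    refine measure_mono_null (fun x hx => ?_)
      (lipschitzOnWith_image_null (hΦinvlip.mono (fun y (hy : y ∈ {y | ¬ y ∈ V'} ∩ V) => hy.2))
        hVV'null)
    obtain ⟨hxU, hxn⟩ := hx
    refine ⟨Φ x, ⟨?_, hΦV hxU⟩, hinv x hxU⟩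
    intro hmem
    exact hxn ⟨Φ x, hmem, hinv x hxU⟩
  have hae : U =ᵐ[volume] (Φinv '' V') := by
    refine ae_eq_set.2 ⟨hUdiff, ?_⟩
    rw [diff_eq_empty.2 himgsub]
    exact measure_empty
  have hinjinv : InjOn Φinv V := by
    intro a ha b hb hab
    rw [← hinv' a ha, ← hinv' b hb, hab]
  -- change of variables inequality
  have key : ∀ H : Euc n → ℝ≥0∞, ∫⁻ x in U, H (Φ x) ∂volume ≤ D * ∫⁻ y in V, H y ∂volume := by
    intro H
    obtain ⟨G, Gmeas, hGle, hGint⟩ :=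
      exists_measurable_le_lintegral_eq (μ := volume.restrict U) (fun x => H (Φ x))
    set g : Euc n → ℝ≥0∞ := fun y => if y ∈ V then G (Φinv y) else 0 with hg
    have hGg : ∀ x ∈ U, G x = g (Φ x) := by
      intro x hx
      simp only [hg, hΦV hx, if_pos, hinv x hx]
    have hgH : ∀ y, g y ≤ H y := by
      intro y
      by_cases hy : y ∈ V
      · simp only [hg, if_pos hy]
        calc G (Φinv y) ≤ H (Φ (Φinv y)) := hGle (Φinv y)
          _ = H y := by rw [hinv' y hy]
      · simp [hg, hy]
    have hdetae : ∀ᵐ y ∂(volume.restrict V'),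
        (‖LinearMap.det ((fderiv ℝ Φinv y : Euc n →ₗ[ℝ] Euc n))‖₊ : ℝ≥0∞) ≤ D := by
      have h0 : ∀ᵐ y ∂(volume.restrict V),
          (‖LinearMap.det ((fderiv ℝ Φinv y : Euc n →ₗ[ℝ] Euc n))‖₊ : ℝ≥0∞) ≤ D :=
        ENNReal.ae_le_essSup _
      exact ae_mono (Measure.restrict_mono hV'sub le_rfl) h0
    calc ∫⁻ x in U, H (Φ x) ∂volume = ∫⁻ x in U, G x ∂volume := hGint
      _ = ∫⁻ x in U, g (Φ x) ∂volume := setLIntegral_congr_fun hUm hGg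
      _ = ∫⁻ x in Φinv '' V', g (Φ x) ∂volume := setLIntegral_congr hae
      _ = ∫⁻ y in V', ENNReal.ofReal |(fderiv ℝ Φinv y).det| * g (Φ (Φinv y)) ∂volume :=
          lintegral_image_eq_lintegral_abs_det_fderiv_mul volume hV'm
            (fun y hy => (hy.2.hasFDerivAt).hasFDerivWithinAt) (hinjinv.mono hV'sub) _
      _ = ∫⁻ y in V', (‖LinearMap.det ((fderiv ℝ Φinv y : Euc n →ₗ[ℝ] Euc n))‖₊ : ℝ≥0∞)
            * g y ∂volume := by
          refine setLIntegral_congr_fun hV'm ?_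
          intro y hy
          beta_reduce
          rw [hinv' y (hV'sub hy), ← Real.enorm_eq_ofReal_abs]
          rfl
      _ ≤ ∫⁻ y in V', D * g y ∂volume :=
          lintegral_mono_ae (hdetae.mono fun y hy => mul_le_mul' hy le_rfl)
      _ = D * ∫⁻ y in V', g y ∂volume := lintegral_const_mul' _ _ hDfin
      _ ≤ D * ∫⁻ y in V, g y ∂volume :=
          mul_le_mul' le_rfl (lintegral_mono' (Measure.restrict_mono hV'sub le_rfl) le_rfl)
      _ ≤ D * ∫⁻ y in V, H y ∂volume := mul_le_mul' le_rfl (lintegral_mono hgH)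
  set h : Euc n → ℝ := fun y => formNormF (⇑(ω y)) with hh
  have stepD : eLpNorm (fun x => h (Φ x)) p (volume.restrict U)
      ≤ D ^ (((1:ℝ≥0∞)/p).toReal) * eLpNorm h p (volume.restrict V) := by
    rcases eq_or_ne p ∞ with hptop | hptop
    · subst hptop
      have hr : (((1:ℝ≥0∞)/∞).toReal) = 0 := by simp
      rw [hr, ENNReal.rpow_zero, one_mul, eLpNorm_exponent_top, eLpNorm_exponent_top]
      set cV := eLpNormEssSup h (volume.restrict V) with hcV
      have hc : ∀ᵐ y ∂(volume.restrict V), (‖h y‖₊ : ℝ≥0∞) ≤ cV := ae_le_eLpNormEssSup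
      set N := {y | ¬ ((‖h y‖₊ : ℝ≥0∞) ≤ cV)} with hN
      have hNnull : volume (N ∩ V) = 0 := by
        have h2 := ae_iff.1 hc
        rwa [Measure.restrict_apply' hVm] at h2
      have hNU : volume ({x | ¬ ((‖h (Φ x)‖₊ : ℝ≥0∞) ≤ cV)} ∩ U) = 0 := by
        refine measure_mono_null ?_
          (lipschitzOnWith_image_null (hΦinvlip.mono (fun y (hy : y ∈ N ∩ V) => hy.2)) hNnull)
        rintro x ⟨hxb, hxU⟩
        exact ⟨Φ x, ⟨hxb, hΦV hxU⟩, hinv x hxU⟩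
      have hstep : ∀ᵐ x ∂(volume.restrict U), (‖h (Φ x)‖₊ : ℝ≥0∞) ≤ cV := by
        rw [ae_iff, Measure.restrict_apply' hUm]
        exact hNU
      exact essSup_le_of_ae_le _ hstep
    · have hp0 : p ≠ 0 := fun h0 => by simp [h0] at hp
      have hpt : 0 < p.toReal := ENNReal.toReal_pos hp0 hptop
      rw [eLpNorm_eq_lintegral_rpow_enorm hp0 hptop, eLpNorm_eq_lintegral_rpow_enorm hp0 hptop]
      have hr : (((1:ℝ≥0∞)/p).toReal) = 1 / p.toReal := by
        rw [ENNReal.toReal_div]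
        simp
      rw [hr]
      have hkey := key (fun y => (‖h y‖₊ : ℝ≥0∞) ^ p.toReal)
      calc (∫⁻ x in U, (‖h (Φ x)‖₊:ℝ≥0∞) ^ p.toReal ∂volume) ^ (1/p.toReal)
          ≤ (D * ∫⁻ y in V, (‖h y‖₊:ℝ≥0∞) ^ p.toReal ∂volume) ^ (1/p.toReal) :=
            ENNReal.rpow_le_rpow hkey (by positivity)
        _ = D ^ (1/p.toReal) * (∫⁻ y in V, (‖h y‖₊:ℝ≥0∞) ^ p.toReal ∂volume) ^ (1/p.toReal) :=
            ENNReal.mul_rpow_of_nonneg _ _ (by positivity)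
  -- pointwise bound and assembly
  set Mn : ℝ≥0 := M.toNNReal with hMn
  have hMnM : (Mn : ℝ≥0∞) = M := ENNReal.coe_toNNReal hMfin
  have hptw : ∀ᵐ x ∂(volume.restrict U),
      ‖formNormF ⇑(pullbackForm Φ ω x)‖ ≤ ‖(((Mn:ℝ)^k) • (fun x => h (Φ x))) x‖ := by
    filter_upwards [ENNReal.ae_le_essSup (fun x => (‖fderiv ℝ Φ x‖₊ : ℝ≥0∞))] with x hx
    have h1 : ‖fderiv ℝ Φ x‖ ≤ (Mn:ℝ) := by
      have h2 : (‖fderiv ℝ Φ x‖₊ : ℝ≥0∞) ≤ (Mn : ℝ≥0∞) := by rw [hMnM]; exact hx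
      exact_mod_cast h2
    have h2 : formNormF ⇑(pullbackForm Φ ω x) ≤ (Mn:ℝ)^k * h (Φ x) := by
      refine le_trans (formNormF_comp_le (ω (Φ x)) (fderiv ℝ Φ x)) ?_
      exact mul_le_mul (pow_le_pow_left₀ (norm_nonneg _) h1 k) le_rfl (formNormF_nonneg _)
        (by positivity)
    have h3 : (((Mn:ℝ)^k) • (fun x => h (Φ x))) x = (Mn:ℝ)^k * h (Φ x) := rfl
    rw [h3]
    calc ‖formNormF ⇑(pullbackForm Φ ω x)‖ = formNormF ⇑(pullbackForm Φ ω x) := by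
          rw [Real.norm_eq_abs, abs_of_nonneg (formNormF_nonneg _)]
      _ ≤ (Mn:ℝ)^k * h (Φ x) := h2
      _ ≤ ‖(Mn:ℝ)^k * h (Φ x)‖ := le_trans (le_abs_self _) (le_of_eq (Real.norm_eq_abs _).symm)
  have hcoe : ((‖(Mn:ℝ)^k‖₊ : ℝ≥0) : ℝ≥0∞) = M^k := by
    rw [nnnorm_pow, NNReal.nnnorm_eq, ENNReal.coe_pow, hMnM]
  have hmain : formLpNorm p (pullbackForm Φ ω) U
      ≤ M^k * D^(((1:ℝ≥0∞)/p).toReal) * formLpNorm p ω V := by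
    calc formLpNorm p (pullbackForm Φ ω) U
        ≤ eLpNorm (((Mn:ℝ)^k) • (fun x => h (Φ x))) p (volume.restrict U) :=
          eLpNorm_mono_ae hptw
      _ = (‖(Mn:ℝ)^k‖₊ : ℝ≥0∞) * eLpNorm (fun x => h (Φ x)) p (volume.restrict U) :=
          eLpNorm_const_smul _ _ _ _
      _ ≤ (‖(Mn:ℝ)^k‖₊ : ℝ≥0∞) * (D ^ (((1:ℝ≥0∞)/p).toReal) * eLpNorm h p (volume.restrict V)) :=
          mul_le_mul' le_rfl stepD
      _ = M^k * D^(((1:ℝ≥0∞)/p).toReal) * formLpNorm p ω V := by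
          rw [hcoe, ← mul_assoc]
          rfl
  refine ⟨lt_of_le_of_lt hmain ?_, hmain, ?_⟩
  · refine ENNReal.mul_lt_top (ENNReal.mul_lt_top ?_ ?_) hω
    · exact ENNReal.pow_lt_top hMfin.lt_top
    · exact ENNReal.rpow_lt_top_of_nonneg ENNReal.toReal_nonneg hDfin
  · refine mul_le_mul' (mul_le_mul' le_rfl ?_) le_rfl
    calc D ^ (((1:ℝ≥0∞)/p).toReal) ≤ (E^n) ^ (((1:ℝ≥0∞)/p).toReal) :=
        ENNReal.rpow_le_rpow hDle ENNReal.toReal_nonneg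
      _ = E ^ (((n:ℝ≥0∞)/p).toReal) := by
          rw [← ENNReal.rpow_natCast E n, ← ENNReal.rpow_mul]
          congr 1
          rw [ENNReal.toReal_div, ENNReal.toReal_div]
          simp [div_eq_mul_inv]

end
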